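/- arXiv:2505.09400 — 2 statements merged into one kernel-verified Lean document; each statement's English description precedes it below -/
import Mathlib

section
/- Let u(t,·) : ℕ₀^d \ {0} → ℝ₊ solve the discrete coagulation system ∂_t u_i(t,n) = α_i((1/2)(u_i ⋆ u_i)(t,n) − ⟨u_i(t),1⟩ u_i(t,n)) + Σ_{j≠i}(w_{j,i}u_j(t,n) − w_{i,j}u_i(t,n)) with u_i(0,n) = cβ_i δ_{e_i,n}, where (u⋆u)(n) = Σ_{n₁+n₂=n} u(n₁)u(n₂). Assume all sums converge absolutely. Then for λ ∈ [0,1]^d, the generating-function quantities v_i(t,λ) := (1 − ⟨u_i(t),1⟩/(c β_i)) + (1/(cβ_i)) Σ_n u_i(t,n) λ^n satisfy ∂_t v_i = c α_i β_i ((1/2)v_i² + 1/2 − v_i) + Σ_{j≠i}((β_j/β_i) w_{j,i} v_j − w_{i,j} v_i) − Σ_{j≠i}((β_j/β_i) w_{j,i} − w_{i,j}), with v_i(0,λ) = λ_i. -/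
/-- Right-hand side of the discrete multi-dimensional coagulation equation:
`αᵢ((1/2)(uᵢ⋆uᵢ)(n) - ⟨uᵢ,1⟩uᵢ(n)) + Σ_{j≠i}(w_{j,i}uⱼ(n) - w_{i,j}uᵢ(n))`,
where `(u⋆u)(n) = Σ_{n₁+n₂=n} u(n₁)u(n₂)` (here `u(0) = 0` by convention). -/
noncomputable def coagRHS (d : ℕ) (α : Fin d → ℝ) (w : Fin d → Fin d → ℝ)
    (u : ℝ → Fin d → (Fin d → ℕ) → ℝ) (t : ℝ) (i : Fin d) (n : Fin d → ℕ) : ℝ :=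
  α i * ((1 / 2) * ∑ m ∈ Finset.Iic n, u t i m * u t i (n - m)
      - (∑' k : Fin d → ℕ, u t i k) * u t i n)
    + ∑ j ∈ Finset.univ.erase i, (w j i * u t j n - w i j * u t i n)

/-- The generating-function quantity
`vᵢ(t,λ) = (1 - ⟨uᵢ(t),1⟩/(cβᵢ)) + (1/(cβᵢ)) Σₙ uᵢ(t,n) λ^n`. -/
noncomputable def genV (d : ℕ) (c : ℝ) (β : Fin d → ℝ) (lam : Fin d → ℝ)
    (u : ℝ → Fin d → (Fin d → ℕ) → ℝ) (t : ℝ) (i : Fin d) : ℝ :=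
  (1 - (∑' n : Fin d → ℕ, u t i n) / (c * β i))
    + (1 / (c * β i)) * ∑' n : Fin d → ℕ, u t i n * ∏ k, lam k ^ n k


open Finset

attribute [local instance] Finset.HasAntidiagonal.antidiagonalOfLocallyFinite

namespace CoagAux

variable {d : ℕ}

lemma sum_antidiag_eq_Iic (n : Fin d → ℕ) (F : (Fin d → ℕ) → (Fin d → ℕ) → ℝ) :
    ∑ kl ∈ Finset.HasAntidiagonal.antidiagonal n, F kl.1 kl.2 = ∑ m ∈ Finset.Iic n, F m (n - m) := by
  refine Finset.sum_nbij' (fun kl => kl.1) (fun m => (m, n - m)) ?_ ?_ ?_ ?_ ?_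
  · rintro ⟨a, b⟩ hab
    rw [Finset.HasAntidiagonal.mem_antidiagonal] at hab
    rw [Finset.mem_Iic]
    intro k
    have h2 : a k + b k = n k := congrFun hab k
    exact Nat.le.intro h2
  · intro m hm
    rw [Finset.mem_Iic] at hm
    rw [Finset.HasAntidiagonal.mem_antidiagonal]
    funext k
    have h2 : m k ≤ n k := hm k
    simp only [Pi.add_apply, Pi.sub_apply]
    omega
  · rintro ⟨a, b⟩ hab
    rw [Finset.HasAntidiagonal.mem_antidiagonal] at hab
    have : n - a = b := by
      funext k
      have h2 : a k + b k = n k := congrFun hab k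
      simp only [Pi.sub_apply]
      omega
    simp [this]
  · intro m hm; rfl
  · rintro ⟨a, b⟩ hab
    rw [Finset.HasAntidiagonal.mem_antidiagonal] at hab
    have : n - a = b := by
      funext k
      have h2 : a k + b k = n k := congrFun hab k
      simp only [Pi.sub_apply]
      omega
    simp [this]

lemma add_sub_of_mem_Iic {m n : Fin d → ℕ} (hm : m ∈ Finset.Iic n) : m + (n - m) = n := by
  rw [Finset.mem_Iic] at hm
  funext k
  have h2 : m k ≤ n k := hm k
  simp only [Pi.add_apply, Pi.sub_apply]
  omega

/-- Key computation: the generating-function-weighted tsum of the RHS. -/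
lemma tsum_rhs (d : ℕ) (α : Fin d → ℝ) (w : Fin d → Fin d → ℝ)
    (u : ℝ → Fin d → (Fin d → ℕ) → ℝ) (t : ℝ) (i : Fin d)
    (habs : ∀ j, Summable fun n : Fin d → ℕ => |u t j n|)
    (lam : Fin d → ℝ) (hlam1 : ∀ k, |lam k| ≤ 1) :
    ∑' n : Fin d → ℕ, coagRHS d α w u t i n * ∏ k, lam k ^ n k
      = α i * ((1 / 2) * ((∑' n : Fin d → ℕ, u t i n * ∏ k, lam k ^ n k)
              * (∑' n : Fin d → ℕ, u t i n * ∏ k, lam k ^ n k))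
          - (∑' n : Fin d → ℕ, u t i n) * (∑' n : Fin d → ℕ, u t i n * ∏ k, lam k ^ n k))
        + ∑ j ∈ Finset.univ.erase i,
            (w j i * (∑' n : Fin d → ℕ, u t j n * ∏ k, lam k ^ n k)
              - w i j * (∑' n : Fin d → ℕ, u t i n * ∏ k, lam k ^ n k)) := by
  set P : (Fin d → ℕ) → ℝ := fun n => ∏ k, lam k ^ n k with hP_def
  have hP1 : ∀ n, |P n| ≤ 1 := by
    intro n
    rw [hP_def]
    dsimp only
    rw [Finset.abs_prod]
    refine Finset.prod_le_one (fun k _ => abs_nonneg _) (fun k _ => ?_)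
    rw [abs_pow]
    exact pow_le_one₀ (abs_nonneg _) (hlam1 k)
  have hPmul : ∀ a b : Fin d → ℕ, P (a + b) = P a * P b := by
    intro a b
    rw [hP_def]
    dsimp only
    rw [← Finset.prod_mul_distrib]
    exact Finset.prod_congr rfl fun k _ => by rw [Pi.add_apply, pow_add]
  set g : Fin d → (Fin d → ℕ) → ℝ := fun j n => u t j n * P n with hg_def
  have hgnorm : ∀ j, Summable fun n => ‖g j n‖ := by
    intro j
    refine Summable.of_nonneg_of_le (fun n => norm_nonneg _) (fun n => ?_) (habs j)
    rw [hg_def]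
    simp only [Real.norm_eq_abs, abs_mul]
    calc |u t j n| * |P n| ≤ |u t j n| * 1 :=
          mul_le_mul_of_nonneg_left (hP1 n) (abs_nonneg _)
      _ = |u t j n| := mul_one _
  have hg : ∀ j, Summable (g j) := fun j => (hgnorm j).of_norm
  have hconv_eq : ∀ n : Fin d → ℕ,
      (∑ m ∈ Finset.Iic n, u t i m * u t i (n - m)) * P n
        = ∑ kl ∈ Finset.HasAntidiagonal.antidiagonal n, g i kl.1 * g i kl.2 := by
    intro n
    rw [sum_antidiag_eq_Iic n (fun a b => g i a * g i b), Finset.sum_mul]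
    refine Finset.sum_congr rfl fun m hm => ?_
    have h1 : P m * P (n - m) = P n := by
      rw [← hPmul, add_sub_of_mem_Iic hm]
    rw [hg_def]
    dsimp only
    rw [← h1]; ring
  have hmul2 : Summable fun x : (Fin d → ℕ) × (Fin d → ℕ) => g i x.1 * g i x.2 :=
    summable_mul_of_summable_norm (hgnorm i) (hgnorm i)
  have hconv_summable :
      Summable fun n : Fin d → ℕ => (∑ m ∈ Finset.Iic n, u t i m * u t i (n - m)) * P n := by
    simp only [hconv_eq]
    exact summable_sum_mul_antidiagonal_of_summable_mul hmul2
  have hconv_tsum :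
      (∑' n : Fin d → ℕ, (∑ m ∈ Finset.Iic n, u t i m * u t i (n - m)) * P n)
        = (∑' n, g i n) * (∑' n, g i n) := by
    rw [tsum_congr hconv_eq]
    exact (Summable.tsum_mul_tsum_eq_tsum_sum_antidiagonal (hg i) (hg i) hmul2).symm
  have hexpand : ∀ n : Fin d → ℕ, coagRHS d α w u t i n * P n
      = (α i * ((1 / 2) * ((∑ m ∈ Finset.Iic n, u t i m * u t i (n - m)) * P n)
          - (∑' k : Fin d → ℕ, u t i k) * g i n))
        + ∑ j ∈ Finset.univ.erase i, (w j i * g j n - w i j * g i n) := by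
    intro n
    rw [coagRHS, add_mul, Finset.sum_mul]
    congr 1
    · rw [hg_def]; dsimp only; ring
    · refine Finset.sum_congr rfl fun j _ => ?_
      rw [hg_def]; dsimp only; ring
  have hs1 : Summable fun n : Fin d → ℕ =>
      α i * ((1 / 2) * ((∑ m ∈ Finset.Iic n, u t i m * u t i (n - m)) * P n)
        - (∑' k : Fin d → ℕ, u t i k) * g i n) :=
    (((hconv_summable.mul_left (1 / 2)).sub
      ((hg i).mul_left (∑' k : Fin d → ℕ, u t i k))).mul_left (α i))
  have hs2 : Summable fun n : Fin d → ℕ =>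
      ∑ j ∈ Finset.univ.erase i, (w j i * g j n - w i j * g i n) := by
    refine summable_sum fun j _ => ?_
    exact ((hg j).mul_left (w j i)).sub ((hg i).mul_left (w i j))
  rw [tsum_congr hexpand, Summable.tsum_add hs1 hs2, tsum_mul_left,
    Summable.tsum_sub (hconv_summable.mul_left (1 / 2)) ((hg i).mul_left (∑' k : Fin d → ℕ, u t i k)),
    tsum_mul_left, tsum_mul_left, hconv_tsum,
    Summable.tsum_finsetSum (fun j _ => ((hg j).mul_left (w j i)).sub ((hg i).mul_left (w i j)))]
  congr 1
  refine Finset.sum_congr rfl fun j _ => ?_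
  rw [Summable.tsum_sub ((hg j).mul_left (w j i)) ((hg i).mul_left (w i j)), tsum_mul_left, tsum_mul_left]

lemma leaf1 (c a b S G : ℝ) (hc : c ≠ 0) (hb : b ≠ 0) :
    c * a * b * ((1 / 2) * ((1 - S / (c * b)) + (1 / (c * b)) * G) ^ 2 + 1 / 2
        - ((1 - S / (c * b)) + (1 / (c * b)) * G))
      = -(1 / (c * b)) * (a * ((1 / 2) * (S * S) - S * S))
        + (1 / (c * b)) * (a * ((1 / 2) * (G * G) - S * G)) := by
  field_simp
  ring

lemma leaf2 (c bi bj wji wij Si Gi Sj Gj : ℝ) (hc : c ≠ 0) (hbi : bi ≠ 0) (hbj : bj ≠ 0) :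
    (bj / bi * wji * ((1 - Sj / (c * bj)) + (1 / (c * bj)) * Gj)
        - wij * ((1 - Si / (c * bi)) + (1 / (c * bi)) * Gi))
      - (bj / bi * wji - wij)
      = -(1 / (c * bi)) * (wji * Sj - wij * Si) + (1 / (c * bi)) * (wji * Gj - wij * Gi) := by
  field_simp
  ring

lemma assemble {ι : Type*} (k b a M : ℝ) (s : Finset ι) (F H T U : ι → ℝ)
    (h1 : M = -k * b + k * a) (h2 : ∀ j ∈ s, T j - U j = -k * F j + k * H j) :
    M + ∑ j ∈ s, T j - ∑ j ∈ s, U j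
      = -k * (b + ∑ j ∈ s, F j) + k * (a + ∑ j ∈ s, H j) := by
  rw [mul_add, mul_add, Finset.mul_sum, Finset.mul_sum, add_add_add_comm,
    ← Finset.sum_add_distrib, add_sub_assoc, ← Finset.sum_sub_distrib, h1]
  congr 1
  exact Finset.sum_congr rfl h2

end CoagAux

open CoagAux in
/-- If `u` solves the discrete coagulation system with initial condition
`uᵢ(0,n) = cβᵢ δ_{eᵢ,n}` and all sums converge absolutely (with termwise
differentiation of the sums being valid), then for `λ ∈ [0,1]^d` the
generating-function quantities `vᵢ` satisfy
`∂ₜvᵢ = cαᵢβᵢ((1/2)vᵢ² + 1/2 - vᵢ) + Σ_{j≠i}((βⱼ/βᵢ)w_{j,i}vⱼ - w_{i,j}vᵢ)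
  - Σ_{j≠i}((βⱼ/βᵢ)w_{j,i} - w_{i,j})`, with `vᵢ(0,λ) = λᵢ`. -/
theorem stmt_11 (d : ℕ) (hd : 1 ≤ d)
    (α β : Fin d → ℝ) (hα : ∀ i, 0 < α i) (hβ : ∀ i, 0 < β i)
    (c : ℝ) (hc : 0 < c)
    (w : Fin d → Fin d → ℝ) (hw : ∀ i j, i ≠ j → 0 ≤ w i j)
    (lam : Fin d → ℝ) (hlam : ∀ i, lam i ∈ Set.Icc (0 : ℝ) 1)
    (u : ℝ → Fin d → (Fin d → ℕ) → ℝ)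
    (hzero : ∀ t i, u t i 0 = 0)
    (hinit : ∀ i n, u 0 i n = if n = Pi.single i 1 then c * β i else 0)
    (habs : ∀ t ≥ (0 : ℝ), ∀ i, Summable fun n : Fin d → ℕ => |u t i n|)
    (hode : ∀ t ≥ (0 : ℝ), ∀ i n,
      HasDerivWithinAt (fun s => u s i n) (coagRHS d α w u t i n) (Set.Ici 0) t)
    (hmass : ∀ t ≥ (0 : ℝ), ∀ i,
      HasDerivWithinAt (fun s => ∑' n : Fin d → ℕ, u s i n)
        (∑' n : Fin d → ℕ, coagRHS d α w u t i n) (Set.Ici 0) t)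
    (hgen : ∀ t ≥ (0 : ℝ), ∀ i,
      HasDerivWithinAt (fun s => ∑' n : Fin d → ℕ, u s i n * ∏ k, lam k ^ n k)
        (∑' n : Fin d → ℕ, coagRHS d α w u t i n * ∏ k, lam k ^ n k)
        (Set.Ici 0) t) :
    ∀ i, genV d c β lam u 0 i = lam i
      ∧ ∀ t ≥ (0 : ℝ),
        HasDerivWithinAt (fun s => genV d c β lam u s i)
          (c * α i * β i * ((1 / 2) * genV d c β lam u t i ^ 2 + 1 / 2
              - genV d c β lam u t i)
            + ∑ j ∈ Finset.univ.erase i,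
                (β j / β i * w j i * genV d c β lam u t j
                  - w i j * genV d c β lam u t i)
            - ∑ j ∈ Finset.univ.erase i, (β j / β i * w j i - w i j))
          (Set.Ici 0) t := by
  have hc0 : c ≠ 0 := ne_of_gt hc
  have hβ0 : ∀ j, β j ≠ 0 := fun j => ne_of_gt (hβ j)
  have hβc : ∀ j, c * β j ≠ 0 := fun j => mul_ne_zero hc0 (hβ0 j)
  have hlam1 : ∀ k, |lam k| ≤ 1 := fun k =>
    abs_le.mpr ⟨by linarith [(hlam k).1], (hlam k).2⟩
  intro i
  constructor
  · -- initial condition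
    have hS0 : (∑' n : Fin d → ℕ, u 0 i n) = c * β i := by
      rw [tsum_congr (fun n => hinit i n)]
      exact tsum_ite_eq (Pi.single i 1) (fun _ => c * β i)
    have hPs : (∏ k, lam k ^ (Pi.single i 1 : Fin d → ℕ) k) = lam i := by
      rw [Finset.prod_eq_single i]
      · rw [Pi.single_eq_same, pow_one]
      · intro k _ hk
        rw [Pi.single_eq_of_ne hk, pow_zero]
      · intro h
        exact absurd (Finset.mem_univ i) h
    have hG0 : (∑' n : Fin d → ℕ, u 0 i n * ∏ k, lam k ^ n k) = c * β i * lam i := by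
      have h1 : ∀ n : Fin d → ℕ,
          u 0 i n * ∏ k, lam k ^ n k
            = if n = Pi.single i 1 then c * β i * lam i else 0 := by
        intro n
        rw [hinit i n]
        split_ifs with h
        · subst h
          rw [hPs]
        · exact zero_mul _
      rw [tsum_congr h1]
      exact tsum_ite_eq (Pi.single i 1) (fun _ => c * β i * lam i)
    simp only [genV, hS0, hG0]
    rw [div_self (hβc i), one_div, ← mul_assoc, inv_mul_cancel₀ (hβc i), one_mul]
    ring
  · -- derivative
    intro t ht
    have hA := tsum_rhs d α w u t i (habs t ht) lam hlam1
    have hB := tsum_rhs d α w u t i (habs t ht) (fun _ => 1) (fun _ => by norm_num)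
    simp only [one_pow, Finset.prod_const_one, mul_one] at hB
    have hv : (fun s => genV d c β lam u s i)
        = fun s => 1 + ((-(1 / (c * β i))) * (∑' n : Fin d → ℕ, u s i n)
            + (1 / (c * β i)) * ∑' n : Fin d → ℕ, u s i n * ∏ k, lam k ^ n k) := by
      funext s
      simp only [genV]
      ring
    rw [hv]
    have hD := (((hmass t ht i).const_mul (-(1 / (c * β i)))).add
      ((hgen t ht i).const_mul (1 / (c * β i)))).const_add 1
    convert hD using 1
    · rfl
    · rfl
    · rfl
    rw [hA, hB]
    refine assemble (1 / (c * β i)) _ _ _ _ _ _ _ _ ?_ ?_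
    · exact leaf1 c (α i) (β i) _ _ hc0 (hβ0 i)
    · intro j _
      exact leaf2 c (β i) (β j) (w j i) (w i j) _ _ _ _ hc0 (hβ0 i) (hβ0 j)
end

section
/- Suppose that for all i ∈ [d] we are given d_i := (cα_iβ_i)/2 − Σ_{j≠i}((β_j/β_i)w_{j,i} − w_{i,j}) ≥ 0, and let v_i(t,λ) solve ∂_t v_i = (cα_iβ_i/2) v_i² + d_i − ((cα_iβ_i/2) + d_i) v_i + Σ_{j≠i} (β_j/β_i) w_{j,i}(v_j − v_i) with v_i(0,λ) = λ_i ∈ [0,1]. Then this system is identical to the backward equation of the multi-type branching process in which a type-i particle branches at rate cα_iβ_i/2, dies at rate d_i, and moves from type i to type j at rate (β_j/β_i)w_{j,i}; consequently v_i(t,λ) = E_{e_i}[λ^{Z(t)}], and 0 ≤ v_i(t,λ) ≤ 1 for all t ≥ 0. -/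
/-- Probability generating function `Σₙ p(t,a,n) λ^n` of a transition kernel `p`
on `ℕ₀^d` started from configuration `a`. -/
noncomputable def pgf (d : ℕ) (lam : Fin d → ℝ)
    (p : ℝ → (Fin d → ℕ) → (Fin d → ℕ) → ℝ) (t : ℝ) (a : Fin d → ℕ) : ℝ :=
  ∑' n : Fin d → ℕ, p t a n * ∏ k, lam k ^ n k

/-- Stochastic representation for the transformed critical coagulation equation:
assume `dᵢ := cαᵢβᵢ/2 - Σ_{j≠i}((βⱼ/βᵢ)w_{j,i} - w_{i,j}) ≥ 0`, and let `v` solve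
`∂ₜvᵢ = (cαᵢβᵢ/2)vᵢ² + dᵢ - ((cαᵢβᵢ/2) + dᵢ)vᵢ + Σ_{j≠i}(βⱼ/βᵢ)w_{j,i}(vⱼ - vᵢ)`
with `vᵢ(0,λ) = λᵢ ∈ [0,1]`. This is the backward equation of the multi-type
branching process in which a type-`i` particle branches at rate `cαᵢβᵢ/2`, dies
at rate `dᵢ`, and moves from type `i` to `j` at rate `(βⱼ/βᵢ)w_{j,i}` (the
process being encoded by its transition function `p`, satisfying the backward
equation, absorption at `0` and the branching property); consequently
`vᵢ(t,λ) = E_{eᵢ}[λ^{Z(t)}]`, and `0 ≤ vᵢ(t,λ) ≤ 1` for all `t ≥ 0`. -/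
theorem stmt_18 (d : ℕ) (hd : 1 ≤ d)
    (α β : Fin d → ℝ) (hα : ∀ i, 0 < α i) (hβ : ∀ i, 0 < β i)
    (c : ℝ) (hc : 0 < c)
    (w : Fin d → Fin d → ℝ) (hw : ∀ i j, i ≠ j → 0 ≤ w i j)
    (dth : Fin d → ℝ)
    (hdth : ∀ i, dth i = c * α i * β i / 2
      - ∑ j ∈ Finset.univ.erase i, (β j / β i * w j i - w i j))
    (hdnn : ∀ i, 0 ≤ dth i)
    (lam : Fin d → ℝ) (hlam : ∀ i, lam i ∈ Set.Icc (0 : ℝ) 1)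
    -- the branching process, encoded via its transition function
    (p : ℝ → (Fin d → ℕ) → (Fin d → ℕ) → ℝ)
    (hker_nonneg : ∀ t ≥ (0 : ℝ), ∀ a n, 0 ≤ p t a n)
    (hker_sum : ∀ t ≥ (0 : ℝ), ∀ a, Summable (p t a))
    (hker_mass : ∀ t ≥ (0 : ℝ), ∀ a, (∑' n : Fin d → ℕ, p t a n) = 1)
    (hinit : ∀ a n, p 0 a n = if n = a then 1 else 0)
    (habsorb : ∀ t ≥ (0 : ℝ), ∀ n, p t 0 n = if n = 0 then 1 else 0)
    (hbranch : ∀ t ≥ (0 : ℝ), ∀ i,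
      pgf d lam p t (Pi.single i 1 + Pi.single i 1)
        = pgf d lam p t (Pi.single i 1) ^ 2)
    (hback : ∀ t ≥ (0 : ℝ), ∀ i,
      HasDerivWithinAt (fun s => pgf d lam p s (Pi.single i 1))
        (c * α i * β i / 2 * pgf d lam p t (Pi.single i 1 + Pi.single i 1)
          + dth i * pgf d lam p t 0
          + (∑ j ∈ Finset.univ.erase i,
              β j / β i * w j i * pgf d lam p t (Pi.single j 1))
          - (c * α i * β i / 2 + dth i
              + ∑ j ∈ Finset.univ.erase i, β j / β i * w j i)
              * pgf d lam p t (Pi.single i 1))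
        (Set.Ici 0) t)
    -- the solution of the transformed coagulation system
    (v : ℝ → Fin d → ℝ)
    (hv0 : ∀ i, v 0 i = lam i)
    (hvode : ∀ t ≥ (0 : ℝ), ∀ i,
      HasDerivWithinAt (fun s => v s i)
        (c * α i * β i / 2 * v t i ^ 2 + dth i
          - (c * α i * β i / 2 + dth i) * v t i
          + ∑ j ∈ Finset.univ.erase i, β j / β i * w j i * (v t j - v t i))
        (Set.Ici 0) t) :
    ∀ t ≥ (0 : ℝ), ∀ i,
      v t i = pgf d lam p t (Pi.single i 1)
      ∧ 0 ≤ v t i ∧ v t i ≤ 1 := by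
  classical
  set u : ℝ → Fin d → ℝ := fun t i => pgf d lam p t (Pi.single i 1) with hu
  -- basic bounds for the monomials
  have hprod0 : ∀ n : Fin d → ℕ, (0:ℝ) ≤ ∏ k, lam k ^ n k := fun n =>
    Finset.prod_nonneg fun k _ => pow_nonneg (hlam k).1 _
  have hprod1 : ∀ n : Fin d → ℕ, (∏ k, lam k ^ n k) ≤ 1 := fun n =>
    Finset.prod_le_one (fun k _ => pow_nonneg (hlam k).1 _)
      (fun k _ => pow_le_one₀ (hlam k).1 (hlam k).2)
  have hpgf_nonneg : ∀ t ≥ (0:ℝ), ∀ a, 0 ≤ pgf d lam p t a := by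
    intro t ht a
    exact tsum_nonneg fun n => mul_nonneg (hker_nonneg t ht a n) (hprod0 n)
  have hsum' : ∀ t ≥ (0:ℝ), ∀ a,
      Summable (fun n : Fin d → ℕ => p t a n * ∏ k, lam k ^ n k) := by
    intro t ht a
    refine Summable.of_nonneg_of_le
      (fun n => mul_nonneg (hker_nonneg t ht a n) (hprod0 n))
      (fun n => mul_le_of_le_one_right (hker_nonneg t ht a n) (hprod1 n))
      (hker_sum t ht a)
  have hpgf_le : ∀ t ≥ (0:ℝ), ∀ a, pgf d lam p t a ≤ 1 := by
    intro t ht a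
    calc pgf d lam p t a
        ≤ ∑' n, p t a n :=
          Summable.tsum_le_tsum
            (fun n => mul_le_of_le_one_right (hker_nonneg t ht a n) (hprod1 n))
            (hsum' t ht a) (hker_sum t ht a)
      _ = 1 := hker_mass t ht a
  -- pgf from the empty configuration is 1
  have hpgf0 : ∀ t ≥ (0:ℝ), pgf d lam p t 0 = 1 := by
    intro t ht
    unfold pgf
    rw [tsum_eq_single 0 (by intro n hn; rw [habsorb t ht]; simp [hn])]
    rw [habsorb t ht]
    simp
  -- initial condition for u
  have hu0 : ∀ i, u 0 i = lam i := by
    intro i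
    show pgf d lam p 0 (Pi.single i 1) = lam i
    unfold pgf
    rw [tsum_eq_single (Pi.single i 1) (by intro n hn; rw [hinit]; simp [hn])]
    rw [hinit]
    simp only [if_pos rfl, one_mul]
    rw [Finset.prod_eq_single i
      (fun j _ hj => by rw [Pi.single_eq_of_ne hj, pow_zero])
      (by simp)]
    simp
  -- the vector field
  set A : Fin d → ℝ := fun i => c * α i * β i / 2 with hA
  set bco : Fin d → Fin d → ℝ := fun j i => β j / β i * w j i with hbco
  set F : (Fin d → ℝ) → Fin d → ℝ := fun x i =>
    A i * x i ^ 2 + dth i - (A i + dth i) * x i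
      + ∑ j ∈ Finset.univ.erase i, bco j i * (x j - x i) with hF
  have hAnn : ∀ i, 0 ≤ A i := fun i => by
    have := (hα i).le; have := (hβ i).le
    positivity
  have hbnn : ∀ i j, j ∈ Finset.univ.erase i → 0 ≤ bco j i := by
    intro i j hj
    have hji : j ≠ i := Finset.ne_of_mem_erase hj
    exact mul_nonneg (div_nonneg (hβ j).le (hβ i).le) (hw j i hji)
  -- v solves the ODE for F
  have hv' : ∀ t ≥ (0:ℝ), HasDerivWithinAt v (F (v t)) (Set.Ici 0) t := by
    intro t ht
    exact hasDerivWithinAt_pi.2 fun i => hvode t ht i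
  -- u solves the same ODE
  have hu' : ∀ t ≥ (0:ℝ), HasDerivWithinAt u (F (u t)) (Set.Ici 0) t := by
    intro t ht
    refine hasDerivWithinAt_pi.2 fun i => ?_
    have h := hback t ht i
    rw [hbranch t ht i, hpgf0 t ht] at h
    have hval : F (u t) i
        = c * α i * β i / 2 * pgf d lam p t (Pi.single i 1) ^ 2
          + dth i * 1
          + (∑ j ∈ Finset.univ.erase i,
              β j / β i * w j i * pgf d lam p t (Pi.single j 1))
          - (c * α i * β i / 2 + dth i
              + ∑ j ∈ Finset.univ.erase i, β j / β i * w j i)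
              * pgf d lam p t (Pi.single i 1) := by
      show A i * u t i ^ 2 + dth i - (A i + dth i) * u t i
          + ∑ j ∈ Finset.univ.erase i, bco j i * (u t j - u t i) = _
      have hsplit : ∑ j ∈ Finset.univ.erase i, bco j i * (u t j - u t i)
          = (∑ j ∈ Finset.univ.erase i, bco j i * u t j)
            - (∑ j ∈ Finset.univ.erase i, bco j i) * u t i := by
        rw [Finset.sum_mul, ← Finset.sum_sub_distrib]
        exact Finset.sum_congr rfl fun j _ => by ring
      rw [hsplit]
      show _ = A i * u t i ^ 2 + dth i * 1
          + (∑ j ∈ Finset.univ.erase i, bco j i * u t j)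
          - (A i + dth i + ∑ j ∈ Finset.univ.erase i, bco j i) * u t i
      ring
    rw [hval]
    exact h
  -- main claim: v = u on [0, ∞)
  intro t₀ ht₀ i
  have hvc : ContinuousOn v (Set.Icc 0 t₀) := fun s hs =>
    ((hv' s hs.1).continuousWithinAt).mono (fun x hx => hx.1)
  have huc : ContinuousOn u (Set.Icc 0 t₀) := fun s hs =>
    ((hu' s hs.1).continuousWithinAt).mono (fun x hx => hx.1)
  obtain ⟨C, hC⟩ := isCompact_Icc.exists_bound_of_continuousOn hvc
  set R : ℝ := max C 1 with hR
  have hR1 : (1:ℝ) ≤ R := le_max_right _ _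
  have hR0 : (0:ℝ) ≤ R := by linarith
  -- both trajectories stay in the closed ball of radius R
  have hvs : ∀ s ∈ Set.Icc (0:ℝ) t₀, v s ∈ Metric.closedBall (0 : Fin d → ℝ) R := by
    intro s hs
    rw [Metric.mem_closedBall, dist_zero_right]
    exact (hC s hs).trans (le_max_left _ _)
  have hus : ∀ s ∈ Set.Icc (0:ℝ) t₀, u s ∈ Metric.closedBall (0 : Fin d → ℝ) R := by
    intro s hs
    rw [Metric.mem_closedBall, dist_zero_right]
    refine (pi_norm_le_iff_of_nonneg hR0).2 fun k => ?_
    rw [Real.norm_eq_abs, abs_le]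
    constructor
    · linarith [hpgf_nonneg s hs.1 (Pi.single k 1)]
    · linarith [hpgf_le s hs.1 (Pi.single k 1)]
  -- Lipschitz constant
  set Kr : ℝ := ∑ i, (A i * (2 * R) + (A i + dth i)
      + 2 * ∑ j ∈ Finset.univ.erase i, bco j i) with hKr
  have hterm_nn : ∀ i : Fin d, 0 ≤ A i * (2 * R) + (A i + dth i)
      + 2 * ∑ j ∈ Finset.univ.erase i, bco j i := by
    intro i
    have h1 : 0 ≤ A i * (2 * R) := mul_nonneg (hAnn i) (by linarith)
    have h2 : 0 ≤ ∑ j ∈ Finset.univ.erase i, bco j i :=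
      Finset.sum_nonneg (hbnn i)
    have := hdnn i; have := hAnn i
    linarith
  have hKrnn : 0 ≤ Kr := Finset.sum_nonneg fun i _ => hterm_nn i
  have hlip : LipschitzOnWith Kr.toNNReal F (Metric.closedBall (0 : Fin d → ℝ) R) := by
    refine LipschitzOnWith.of_dist_le_mul ?_
    intro x hx y hy
    rw [Real.coe_toNNReal _ hKrnn]
    have hD0 : 0 ≤ dist x y := dist_nonneg
    refine (dist_pi_le_iff (mul_nonneg hKrnn hD0)).2 fun i => ?_
    have hxy : ∀ k, |x k - y k| ≤ dist x y := by
      intro k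
      have := dist_le_pi_dist x y k
      rwa [Real.dist_eq] at this
    have hxb : ∀ k, |x k| ≤ R := by
      intro k
      have h1 := norm_le_pi_norm x k
      rw [Metric.mem_closedBall, dist_zero_right] at hx
      rw [Real.norm_eq_abs] at h1
      linarith
    have hyb : ∀ k, |y k| ≤ R := by
      intro k
      have h1 := norm_le_pi_norm y k
      rw [Metric.mem_closedBall, dist_zero_right] at hy
      rw [Real.norm_eq_abs] at h1
      linarith
    rw [Real.dist_eq]
    have hdiff : F x i - F y i
        = A i * (x i ^ 2 - y i ^ 2) - (A i + dth i) * (x i - y i)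
          + ∑ j ∈ Finset.univ.erase i, bco j i * ((x j - x i) - (y j - y i)) := by
      have hcomb : (∑ j ∈ Finset.univ.erase i, bco j i * (x j - x i))
          - (∑ j ∈ Finset.univ.erase i, bco j i * (y j - y i))
          = ∑ j ∈ Finset.univ.erase i, bco j i * ((x j - x i) - (y j - y i)) := by
        rw [← Finset.sum_sub_distrib]
        exact Finset.sum_congr rfl fun j _ => by ring
      show A i * x i ^ 2 + dth i - (A i + dth i) * x i
          + ∑ j ∈ Finset.univ.erase i, bco j i * (x j - x i)
          - (A i * y i ^ 2 + dth i - (A i + dth i) * y i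
          + ∑ j ∈ Finset.univ.erase i, bco j i * (y j - y i)) = _
      rw [← hcomb]
      ring
    rw [hdiff]
    have step1 : |A i * (x i ^ 2 - y i ^ 2) - (A i + dth i) * (x i - y i)
          + ∑ j ∈ Finset.univ.erase i, bco j i * ((x j - x i) - (y j - y i))|
        ≤ |A i * (x i ^ 2 - y i ^ 2)| + |(A i + dth i) * (x i - y i)|
          + |∑ j ∈ Finset.univ.erase i, bco j i * ((x j - x i) - (y j - y i))| := by
      refine (abs_add_le _ _).trans ?_
      have := abs_sub (A i * (x i ^ 2 - y i ^ 2)) ((A i + dth i) * (x i - y i))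
      linarith
    have b1 : |A i * (x i ^ 2 - y i ^ 2)| ≤ A i * (2 * R) * dist x y := by
      rw [abs_mul, abs_of_nonneg (hAnn i)]
      have : x i ^ 2 - y i ^ 2 = (x i + y i) * (x i - y i) := by ring
      rw [this, abs_mul]
      have h1 : |x i + y i| ≤ 2 * R := (abs_add_le _ _).trans (by linarith [hxb i, hyb i])
      have := hxy i
      calc A i * (|x i + y i| * |x i - y i|)
          ≤ A i * ((2 * R) * dist x y) := by
            refine mul_le_mul_of_nonneg_left ?_ (hAnn i)
            exact mul_le_mul h1 (hxy i) (abs_nonneg _) (by linarith)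
        _ = A i * (2 * R) * dist x y := by ring
    have b2 : |(A i + dth i) * (x i - y i)| ≤ (A i + dth i) * dist x y := by
      rw [abs_mul, abs_of_nonneg (by linarith [hAnn i, hdnn i])]
      exact mul_le_mul_of_nonneg_left (hxy i) (by linarith [hAnn i, hdnn i])
    have b3 : |∑ j ∈ Finset.univ.erase i, bco j i * ((x j - x i) - (y j - y i))|
        ≤ (2 * ∑ j ∈ Finset.univ.erase i, bco j i) * dist x y := by
      refine (Finset.abs_sum_le_sum_abs _ _).trans ?_
      have hrhs : (2 * ∑ j ∈ Finset.univ.erase i, bco j i) * dist x y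
          = ∑ j ∈ Finset.univ.erase i, 2 * bco j i * dist x y := by
        rw [Finset.mul_sum, Finset.sum_mul]
      rw [hrhs]
      refine Finset.sum_le_sum fun j hj => ?_
      rw [abs_mul, abs_of_nonneg (hbnn i j hj)]
      have h1 : |(x j - x i) - (y j - y i)| ≤ 2 * dist x y := by
        have : (x j - x i) - (y j - y i) = (x j - y j) - (x i - y i) := by ring
        rw [this]
        have := abs_sub (x j - y j) (x i - y i)
        linarith [hxy j, hxy i]
      calc bco j i * |(x j - x i) - (y j - y i)|
          ≤ bco j i * (2 * dist x y) :=
            mul_le_mul_of_nonneg_left h1 (hbnn i j hj)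
        _ = 2 * bco j i * dist x y := by ring
    have hsingle : A i * (2 * R) + (A i + dth i)
        + 2 * ∑ j ∈ Finset.univ.erase i, bco j i ≤ Kr :=
      Finset.single_le_sum (fun k _ => hterm_nn k) (Finset.mem_univ i)
    have hfinal := add_le_add (add_le_add b1 b2) b3
    refine (step1.trans hfinal).trans ?_
    calc A i * (2 * R) * dist x y + (A i + dth i) * dist x y
          + (2 * ∑ j ∈ Finset.univ.erase i, bco j i) * dist x y
        = (A i * (2 * R) + (A i + dth i)
            + 2 * ∑ j ∈ Finset.univ.erase i, bco j i) * dist x y := by ring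
      _ ≤ Kr * dist x y := mul_le_mul_of_nonneg_right hsingle hD0
  -- uniqueness via Grönwall
  have heq : Set.EqOn v u (Set.Icc 0 t₀) := by
    refine ODE_solution_unique_of_mem_Icc_right
      (v := fun _ x => F x) (s := fun _ => Metric.closedBall (0 : Fin d → ℝ) R)
      (fun _ _ => hlip) hvc
      (fun s hs => (hv' s hs.1).mono (Set.Ici_subset_Ici.2 hs.1))
      (fun s hs => hvs s ⟨hs.1, hs.2.le⟩)
      huc
      (fun s hs => (hu' s hs.1).mono (Set.Ici_subset_Ici.2 hs.1))
      (fun s hs => hus s ⟨hs.1, hs.2.le⟩)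
      ?_
    funext k
    rw [hv0 k, hu0 k]
  have hvt : v t₀ = u t₀ := heq ⟨ht₀, le_rfl⟩
  refine ⟨congrFun hvt i, ?_, ?_⟩
  · rw [congrFun hvt i]; exact hpgf_nonneg t₀ ht₀ _
  · rw [congrFun hvt i]; exact hpgf_le t₀ ht₀ _
end
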